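/- arXiv:2401.17235 — 5 statements merged into one kernel-verified Lean document; each statement's English description precedes it below -/
import Mathlib

section
/- Let A_1, ..., A_k be a partition of [n]. Then for every pair of permutations π, π' of [n], the Ulam distance d_U(π,π') is at least the sum over i of d_U(π|_{A_i}, π'|_{A_i}). -/
/-- Length of a longest common subsequence of two lists. -/
def lcsLen (x y : List ℕ) : ℕ :=
  ((x.sublists.filter (fun s => decide (s.Sublist y))).map List.length).foldr max 0

lemma le_foldr_max {a : ℕ} : ∀ {l : List ℕ}, a ∈ l → a ≤ l.foldr max 0 := by
  intro l
  induction l with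
  | nil => simp
  | cons b t ih =>
    intro h
    simp only [List.foldr_cons, le_max_iff]
    rcases List.mem_cons.mp h with h | h
    · exact Or.inl h.le
    · exact Or.inr (ih h)

lemma foldr_max_zero_or_mem : ∀ (l : List ℕ), l.foldr max 0 = 0 ∨ l.foldr max 0 ∈ l := by
  intro l
  induction l with
  | nil => simp
  | cons b t ih =>
    simp only [List.foldr_cons]
    rcases le_total b (t.foldr max 0) with h | h
    · rw [max_eq_right h]
      rcases ih with h0 | hm
      · exact Or.inl h0
      · exact Or.inr (List.mem_cons_of_mem _ hm)
    · rw [max_eq_left h]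
      exact Or.inr List.mem_cons_self

lemma lcsLen_ge {x y L : List ℕ} (hx : L.Sublist x) (hy : L.Sublist y) :
    L.length ≤ lcsLen x y := by
  apply le_foldr_max
  simp only [List.mem_map, List.mem_filter, List.mem_sublists]
  exact ⟨L, ⟨hx, by simpa using hy⟩, rfl⟩

lemma lcsLen_exists (x y : List ℕ) :
    ∃ L : List ℕ, L.Sublist x ∧ L.Sublist y ∧ L.length = lcsLen x y := by
  have h := foldr_max_zero_or_mem
      ((x.sublists.filter (fun s => decide (s.Sublist y))).map List.length)
  rw [show ((x.sublists.filter (fun s => decide (s.Sublist y))).map List.length).foldr max 0 = lcsLen x y from rfl] at h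
  rcases h with h | h
  · exact ⟨[], List.nil_sublist _, List.nil_sublist _, h.symm⟩
  · simp only [List.mem_map, List.mem_filter, List.mem_sublists] at h
    obtain ⟨L, ⟨hx, hy⟩, hlen⟩ := h
    exact ⟨L, hx, by simpa using hy, hlen⟩

lemma nat_sum_sub {α : Type*} (s : Finset α) (f g : α → ℕ) (h : ∀ i ∈ s, f i ≤ g i) :
    ∑ i ∈ s, (g i - f i) = ∑ i ∈ s, g i - ∑ i ∈ s, f i := by
  classical
  induction s using Finset.induction_on with
  | empty => simp
  | @insert a s hx ih =>
    rw [Finset.sum_insert hx, Finset.sum_insert hx, Finset.sum_insert hx,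
      ih (fun i hi => h i (Finset.mem_insert_of_mem hi))]
    have h1 := h a (Finset.mem_insert_self a s)
    have h2 : ∑ i ∈ s, f i ≤ ∑ i ∈ s, g i :=
      Finset.sum_le_sum (fun i hi => h i (Finset.mem_insert_of_mem hi))
    omega

/-- Superadditivity of the Ulam distance over a partition of the symbol set:
if `A 0, …, A (k-1)` partition `[n]`, then
`d_U(π, π') ≥ Σᵢ d_U(π|_{Aᵢ}, π'|_{Aᵢ})`, where the Ulam distance of two sequences on
a symbol set of size `m` is `m` minus their longest common subsequence length. -/
theorem ulam_ge_sum_of_partition (n k : ℕ) (A : Fin k → Finset ℕ)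
    (hdisj : ∀ i j, i ≠ j → Disjoint (A i) (A j))
    (hcover : Finset.univ.biUnion A = Finset.range n)
    (π π' : List ℕ) (hπ : π.Perm (List.range n)) (hπ' : π'.Perm (List.range n)) :
    ∑ i : Fin k,
        ((A i).card -
          lcsLen (π.filter (fun a => decide (a ∈ A i))) (π'.filter (fun a => decide (a ∈ A i))))
      ≤ n - lcsLen π π' := by
  obtain ⟨L, hLx, hLy, hLlen⟩ := lcsLen_exists π π'
  have hπnd : π.Nodup := hπ.nodup_iff.mpr List.nodup_range
  have hLnd : L.Nodup := hLx.nodup hπnd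
  have hLmem : ∀ a ∈ L, a ∈ Finset.range n := by
    intro a ha
    exact Finset.mem_range.mpr (List.mem_range.mp (hπ.subset (hLx.subset ha)))
  -- each symbol in range n lies in exactly one part
  have huniq : ∀ a ∈ Finset.range n, ∑ i : Fin k, (if a ∈ A i then 1 else 0) = 1 := by
    intro a ha
    rw [← hcover] at ha
    obtain ⟨i₀, _, hi₀⟩ := Finset.mem_biUnion.mp ha
    rw [Finset.sum_eq_single i₀]
    · simp [hi₀]
    · intro j _ hj
      have : a ∉ A j := fun haj =>
        Finset.disjoint_left.mp (hdisj j i₀ hj) haj hi₀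
      simp [this]
    · intro h; exact absurd (Finset.mem_univ i₀) h
  -- sum of filtered lengths equals the length
  have key3 : ∀ (M : List ℕ), (∀ a ∈ M, a ∈ Finset.range n) →
      ∑ i : Fin k, (M.filter (fun a => decide (a ∈ A i))).length = M.length := by
    intro M
    induction M with
    | nil => simp
    | cons a t ih =>
      intro h
      have ha := h a List.mem_cons_self
      simp only [List.filter_cons]
      have : ∀ i : Fin k,
          (if decide (a ∈ A i) = true then a :: t.filter (fun b => decide (b ∈ A i))
            else t.filter (fun b => decide (b ∈ A i))).length
          = (if a ∈ A i then 1 else 0) + (t.filter (fun b => decide (b ∈ A i))).length := by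
        intro i
        by_cases hai : a ∈ A i <;> simp [hai, Nat.add_comm]
      simp only [this]
      rw [Finset.sum_add_distrib, huniq a ha,
        ih (fun b hb => h b (List.mem_cons_of_mem a hb))]
      simp [Nat.add_comm]
  have key1 : ∀ i : Fin k,
      (L.filter (fun a => decide (a ∈ A i))).length ≤
        lcsLen (π.filter (fun a => decide (a ∈ A i))) (π'.filter (fun a => decide (a ∈ A i))) :=
    fun i => lcsLen_ge (hLx.filter _) (hLy.filter _)
  have key2 : ∀ i : Fin k, (L.filter (fun a => decide (a ∈ A i))).length ≤ (A i).card := by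
    intro i
    have hnd : (L.filter (fun a => decide (a ∈ A i))).Nodup := hLnd.filter _
    have hsub : (L.filter (fun a => decide (a ∈ A i))).toFinset ⊆ A i := by
      intro a ha
      rw [List.mem_toFinset, List.mem_filter] at ha
      exact of_decide_eq_true ha.2
    calc (L.filter (fun a => decide (a ∈ A i))).length
        = (L.filter (fun a => decide (a ∈ A i))).toFinset.card :=
          (List.toFinset_card_of_nodup hnd).symm
      _ ≤ (A i).card := Finset.card_le_card hsub
  have key4 : ∑ i : Fin k, (A i).card = n := by
    have := Finset.card_biUnion (s := (Finset.univ : Finset (Fin k))) (t := A)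
      (fun i _ j _ h => hdisj i j h)
    rw [hcover, Finset.card_range] at this
    exact this.symm
  calc ∑ i : Fin k,
        ((A i).card -
          lcsLen (π.filter (fun a => decide (a ∈ A i))) (π'.filter (fun a => decide (a ∈ A i))))
      ≤ ∑ i : Fin k, ((A i).card - (L.filter (fun a => decide (a ∈ A i))).length) :=
        Finset.sum_le_sum (fun i _ => Nat.sub_le_sub_left (key1 i) _)
    _ = ∑ i : Fin k, (A i).card - ∑ i : Fin k, (L.filter (fun a => decide (a ∈ A i))).length :=
        nat_sum_sub _ _ _ (fun i _ => key2 i)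
    _ = n - L.length := by rw [key4, key3 L hLmem]
    _ = n - lcsLen π π' := by rw [hLlen]
end

section
/- Let q = 2^t, and let g, g' ∈ {0,1}^t have Hamming distance at least (1−δ)·t for some δ ∈ (0,1). Define permutations σ_g and σ_{g'} of [q] by σ_h(i) = the unique x with i = x XOR h (equivalently σ_h sends position i to symbol i XOR h). Then the length of the longest common subsequence of σ_g and σ_{g'} (viewed as length-q sequences) is at most q^δ = 2^{δt}. -/
/-- The permutation `σ_g` of `[2^t]`, `i ↦ i XOR g`, viewed as a length-`2^t` sequence. -/
def sigmaList (t g : ℕ) : List ℕ := (List.range (2 ^ t)).map (fun i => i ^^^ g)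

lemma foldr_max_le' {k : ℕ} : ∀ l : List ℕ, (∀ a ∈ l, a ≤ k) → l.foldr max 0 ≤ k
  | [], _ => Nat.zero_le k
  | a :: l, h => by
    simp only [List.foldr_cons, max_le_iff]
    exact ⟨h a (List.mem_cons_self ..),
      foldr_max_le' l fun b hb => h b (List.mem_cons_of_mem _ hb)⟩

lemma lcsLen_le' {x y : List ℕ} {k : ℕ}
    (h : ∀ s : List ℕ, s.Sublist x → s.Sublist y → s.length ≤ k) :
    lcsLen x y ≤ k := by
  apply foldr_max_le'
  intro a ha
  simp only [List.mem_map, List.mem_filter, List.mem_sublists, decide_eq_true_eq] at ha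
  obtain ⟨s, ⟨hs1, hs2⟩, rfl⟩ := ha
  exact h s hs1 hs2

/-- Key bit lemma: if both `i < i'` and `i ^^^ d < i' ^^^ d`, then the restrictions of `i, i'`
to the zero bits of `d` still compare strictly. -/
lemma ldiff_lt_ldiff' {i i' d : ℕ} (h1 : i < i') (h2 : i ^^^ d < i' ^^^ d) :
    Nat.ldiff i d < Nat.ldiff i' d := by
  have hne : i ^^^ i' ≠ 0 := by
    intro h
    exact absurd (xor_eq_zero_iff.mp h) h1.ne
  obtain ⟨k, hk, hk'⟩ := Nat.exists_most_significant_bit hne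
  have hagree : ∀ j, k < j → i.testBit j = i'.testBit j := by
    intro j hj
    have := hk' j hj
    simpa [Nat.testBit_xor, bne_eq_false_iff_eq] using this
  have hdiff : i.testBit k ≠ i'.testBit k := by
    have := hk
    simpa [Nat.testBit_xor] using this
  have hik : i.testBit k = false ∧ i'.testBit k = true := by
    rcases Bool.eq_false_or_eq_true (i.testBit k) with h | h
    · exfalso
      have h' : i'.testBit k = false := by
        rcases Bool.eq_false_or_eq_true (i'.testBit k) with h' | h'
        · exact absurd (h.trans h'.symm) hdiff
        · exact h'
      have : i' < i := Nat.lt_of_testBit k h' h fun j hj => (hagree j hj).symm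
      exact absurd h1 (not_lt.mpr this.le)
    · refine ⟨h, ?_⟩
      rcases Bool.eq_false_or_eq_true (i'.testBit k) with h' | h'
      · exact h'
      · exact absurd (h.trans h'.symm) hdiff
  have hdk : d.testBit k = false := by
    by_contra hd
    have hd : d.testBit k = true := by
      rcases Bool.eq_false_or_eq_true (d.testBit k) with h | h
      · exact h
      · exact absurd h hd
    have h1' : (i' ^^^ d).testBit k = false := by
      simp [Nat.testBit_xor, hik.2, hd]
    have h2' : (i ^^^ d).testBit k = true := by
      simp [Nat.testBit_xor, hik.1, hd]
    have : i' ^^^ d < i ^^^ d := by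
      refine Nat.lt_of_testBit k h1' h2' fun j hj => ?_
      simp [Nat.testBit_xor, hagree j hj]
    omega
  refine Nat.lt_of_testBit k ?_ ?_ ?_
  · simp [Nat.testBit_ldiff, hik.1]
  · simp [Nat.testBit_ldiff, hik.2, hdk]
  · intro j hj
    simp [Nat.testBit_ldiff, hagree j hj]

/-- Numbers below `2^t` that avoid the set bits of `d` number at most `2^{#zero bits of d}`. -/
lemma card_and_eq_zero_le' (t d : ℕ) :
    ((Finset.range (2 ^ t)).filter (fun x => x &&& d = 0)).card
      ≤ 2 ^ ((Finset.range t).filter (fun i => d.testBit i = false)).card := by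
  classical
  set Z := (Finset.range t).filter (fun i => d.testBit i = false) with hZ
  have hcard : ((Finset.range (2 ^ t)).filter (fun x => x &&& d = 0)).card
      ≤ (Finset.univ : Finset (↥Z → Bool)).card := by
    apply Finset.card_le_card_of_injOn (fun x => fun i => x.testBit i.val)
    · intro x _
      exact Finset.mem_univ _
    · intro x hx y hy hxy
      simp only [Finset.coe_filter, Set.mem_setOf_eq, Finset.mem_range] at hx hy
      apply Nat.eq_of_testBit_eq
      intro j
      by_cases hj : j < t
      · by_cases hd : d.testBit j = false
        · exact congrFun hxy ⟨j, by simp [hZ, Finset.mem_filter, Finset.mem_range, hj, hd]⟩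
        · have hd : d.testBit j = true := by
            rcases Bool.eq_false_or_eq_true (d.testBit j) with h | h
            · exact h
            · exact absurd h hd
          have e1 := congrArg (fun n => Nat.testBit n j) hx.2
          have e2 := congrArg (fun n => Nat.testBit n j) hy.2
          simp only [Nat.testBit_and, hd, Bool.and_true, Nat.zero_testBit] at e1 e2
          rw [e1, e2]
      · have hle : (2 : ℕ) ^ t ≤ 2 ^ j := Nat.pow_le_pow_right (by norm_num) (le_of_not_gt hj)
        rw [Nat.testBit_lt_two_pow (lt_of_lt_of_le hx.1 hle),
          Nat.testBit_lt_two_pow (lt_of_lt_of_le hy.1 hle)]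
  calc ((Finset.range (2 ^ t)).filter (fun x => x &&& d = 0)).card
      ≤ (Finset.univ : Finset (↥Z → Bool)).card := hcard
    _ = 2 ^ Z.card := by
        rw [Finset.card_univ, Fintype.card_fun, Fintype.card_coe, Fintype.card_bool]

lemma sub_sigma_pairwise' {t h : ℕ} {s : List ℕ} (hs : s.Sublist (sigmaList t h)) :
    (s.map (fun a => a ^^^ h)).Pairwise (· < ·) := by
  have h1 : (s.map (fun a => a ^^^ h)).Sublist (List.range (2 ^ t)) := by
    have := hs.map (fun a => a ^^^ h)
    simpa [sigmaList, List.map_map, Function.comp_def, xor_cancel_right] using this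
  exact (List.pairwise_lt_range).sublist h1

/-- If `g, g' ∈ {0,1}^t` have Hamming distance at least `(1-δ)·t`, then the longest common
subsequence of the permutations `σ_g` and `σ_{g'}` of `[q]`, `q = 2^t`, has length at most
`q^δ = 2^{δt}`. -/
theorem lcs_xor_perms_le (t g g' : ℕ) (δ : ℝ) (hδ : δ ∈ Set.Ioo (0 : ℝ) 1)
    (hg : g < 2 ^ t) (hg' : g' < 2 ^ t)
    (hdist : (1 - δ) * t ≤
      ((Finset.range t).filter (fun i => g.testBit i ≠ g'.testBit i)).card) :
    (lcsLen (sigmaList t g) (sigmaList t g') : ℝ) ≤ (2 : ℝ) ^ (δ * t) := by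
  classical
  obtain ⟨hδ0, hδ1⟩ := hδ
  set d := g ^^^ g' with hd
  set Z := (Finset.range t).filter (fun i => d.testBit i = false) with hZ
  set W := (Finset.range t).filter (fun i => d.testBit i = true) with hW
  set S := (Finset.range (2 ^ t)).filter (fun x => x &&& d = 0) with hS
  have hWd : W = (Finset.range t).filter (fun i => g.testBit i ≠ g'.testBit i) := by
    apply Finset.filter_congr
    intro i _
    simp only [hd, Nat.testBit_xor]
    cases g.testBit i <;> cases g'.testBit i <;> simp
  have hZW : Z.card + W.card = t := by
    have h1 : W = (Finset.range t).filter (fun i => ¬ d.testBit i = false) := by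
      apply Finset.filter_congr
      intro i _
      cases d.testBit i <;> simp
    rw [hZ, h1, Finset.card_filter_add_card_filter_not, Finset.card_range]
  have exor : ∀ a : ℕ, (a ^^^ g) ^^^ d = a ^^^ g' := by
    intro a
    rw [hd, Nat.xor_assoc, ← Nat.xor_assoc g g g', Nat.xor_self, Nat.zero_xor]
  have key : lcsLen (sigmaList t g) (sigmaList t g') ≤ 2 ^ Z.card := by
    apply lcsLen_le'
    intro s hs1 hs2
    set F : ℕ → ℕ := fun a => Nat.ldiff (a ^^^ g) d with hF
    have hp1 : s.Pairwise (fun a b => a ^^^ g < b ^^^ g) :=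
      List.pairwise_map.mp (sub_sigma_pairwise' hs1)
    have hp2 : s.Pairwise (fun a b => a ^^^ g' < b ^^^ g') :=
      List.pairwise_map.mp (sub_sigma_pairwise' hs2)
    have hp : (s.map F).Pairwise (· < ·) := by
      rw [List.pairwise_map]
      refine (hp1.and hp2).imp ?_
      rintro a b ⟨h1, h2⟩
      refine ldiff_lt_ldiff' h1 ?_
      rw [exor a, exor b]
      exact h2
    have hnodup : (s.map F).Nodup := hp.imp (fun h => Nat.ne_of_lt h)
    have hsub : (s.map F).toFinset ⊆ S := by
      intro x hx
      simp only [List.mem_toFinset, List.mem_map] at hx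
      obtain ⟨a, ha, rfl⟩ := hx
      have haS := hs1.subset ha
      simp only [sigmaList, List.mem_map, List.mem_range] at haS
      obtain ⟨i, hi, rfl⟩ := haS
      have hFa : F (i ^^^ g) = Nat.ldiff i d := by
        rw [hF]
        simp [xor_cancel_right]
      rw [hFa, hS]
      refine Finset.mem_filter.mpr ⟨Finset.mem_range.mpr ?_, ?_⟩
      · have hdlt : d < 2 ^ t := Nat.xor_lt_two_pow hg hg'
        exact Nat.bitwise_lt_two_pow hi hdlt
      · apply Nat.eq_of_testBit_eq
        intro j
        simp only [Nat.testBit_and, Nat.testBit_ldiff, Nat.zero_testBit]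
        cases d.testBit j <;> simp
    calc s.length = (s.map F).length := (List.length_map _).symm
      _ = (s.map F).toFinset.card := (List.toFinset_card_of_nodup hnodup).symm
      _ ≤ S.card := Finset.card_le_card hsub
      _ ≤ 2 ^ Z.card := card_and_eq_zero_le' t d
  have hWle : (1 - δ) * t ≤ (W.card : ℝ) := by
    rw [hWd]
    exact hdist
  have hZle : (Z.card : ℝ) ≤ δ * t := by
    have h1 : (Z.card : ℝ) + (W.card : ℝ) = (t : ℝ) := by exact_mod_cast hZW
    have h2 : (1 - δ) * (t : ℝ) = (t : ℝ) - δ * t := by ring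
    linarith
  calc (lcsLen (sigmaList t g) (sigmaList t g') : ℝ)
      ≤ ((2 ^ Z.card : ℕ) : ℝ) := by exact_mod_cast key
    _ = (2 : ℝ) ^ (Z.card : ℝ) := by
        rw [Nat.cast_pow, Nat.cast_ofNat, ← Real.rpow_natCast]
    _ ≤ (2 : ℝ) ^ (δ * t) := Real.rpow_le_rpow_of_exponent_le one_le_two hZle
end

section
/- Let q = 2^t, and let G ⊆ {0,1}^t be a binary code of size at least 2^{εt} with pairwise relative Hamming distance at least (1−δ). Then D = {σ_g : g ∈ G}, where σ_g(i) = i XOR g, is a set of at least q^ε permutations of [q] such that every two distinct members have longest common subsequence of length at most q^δ, i.e., pairwise Ulam distance at least q − q^δ. -/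
private lemma foldr_max_le (l : List ℕ) (b : ℕ) (h : ∀ x ∈ l, x ≤ b) :
    l.foldr max 0 ≤ b := by
  induction l with
  | nil => simp
  | cons a l ih =>
    simp only [List.foldr_cons, max_le_iff]
    exact ⟨h a (by simp), ih fun x hx => h x (by simp [hx])⟩

private lemma order_bit {a b g k : ℕ} (hk : a.testBit k ≠ b.testBit k)
    (hhigh : ∀ j, k < j → a.testBit j = b.testBit j)
    (h1 : a ^^^ g < b ^^^ g) : a.testBit k = g.testBit k := by
  by_contra hne
  have hbg : (b ^^^ g).testBit k = false := by
    rw [Nat.testBit_xor]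
    revert hk hne; cases a.testBit k <;> cases b.testBit k <;> cases g.testBit k <;> simp
  have hag : (a ^^^ g).testBit k = true := by
    rw [Nat.testBit_xor]
    revert hne; cases a.testBit k <;> cases g.testBit k <;> simp
  have hlt : b ^^^ g < a ^^^ g :=
    Nat.lt_of_testBit k hbg hag (fun j hj => by
      rw [Nat.testBit_xor, Nat.testBit_xor, hhigh j hj])
  exact absurd h1 (Nat.lt_asymm hlt)

private lemma agree_false {t g g' a b : ℕ} (ha : a < 2 ^ t) (hb : b < 2 ^ t) (hab : a ≠ b)
    (h1 : a ^^^ g < b ^^^ g) (h2 : a ^^^ g' < b ^^^ g')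
    (hagree : ∀ i < t, g.testBit i = g'.testBit i → a.testBit i = b.testBit i) : False := by
  classical
  set S := (Finset.range t).filter (fun i => a.testBit i ≠ b.testBit i) with hS
  have hbig : ∀ j, t ≤ j → a.testBit j = b.testBit j := by
    intro j hj
    have h2j : 2 ^ t ≤ 2 ^ j := Nat.pow_le_pow_right (by norm_num) hj
    rw [Nat.testBit_lt_two_pow (lt_of_lt_of_le ha h2j),
      Nat.testBit_lt_two_pow (lt_of_lt_of_le hb h2j)]
  have hSne : S.Nonempty := by
    by_contra hne
    apply hab
    apply Nat.eq_of_testBit_eq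
    intro i
    by_cases hit : i < t
    · by_contra hne'
      exact hne ⟨i, by simp [hS, hit, hne']⟩
    · exact hbig i (le_of_not_gt hit)
  set k := S.max' hSne with hkdef
  have hkS : k ∈ S := S.max'_mem hSne
  have hklt : k < t := by
    have := Finset.mem_filter.mp hkS
    simpa using this.1
  have hk : a.testBit k ≠ b.testBit k := by
    have := Finset.mem_filter.mp hkS
    simpa using this.2
  have hhigh : ∀ j, k < j → a.testBit j = b.testBit j := by
    intro j hj
    by_cases hjt : j < t
    · by_contra hne'
      have hjS : j ∈ S := by simp [hS, hjt, hne']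
      exact absurd (S.le_max' j hjS) (not_le.mpr hj)
    · exact hbig j (le_of_not_gt hjt)
  have e1 := order_bit hk hhigh h1
  have e2 := order_bit hk hhigh h2
  exact hk (hagree k hklt (e1 ▸ e2))

private lemma pairwise_of_sublist {t g : ℕ} (hg : g < 2 ^ t) {s : List ℕ}
    (hs : s.Sublist (sigmaList t g)) :
    s.Pairwise (fun x y => x ^^^ g < y ^^^ g) ∧ ∀ a ∈ s, a < 2 ^ t := by
  obtain ⟨l, hl, rfl⟩ := List.sublist_map_iff.mp hs
  constructor
  · rw [List.pairwise_map]
    have hp : l.Pairwise (· < ·) := List.pairwise_lt_range.sublist hl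
    refine hp.imp ?_
    intro x y hxy
    simpa [xor_cancel_right] using hxy
  · intro a ha
    obtain ⟨i, hi, rfl⟩ := List.mem_map.mp ha
    exact Nat.xor_lt_two_pow (List.mem_range.mp (hl.subset hi)) hg

private lemma sublist_len_le {t g g' : ℕ} (hg : g < 2 ^ t) (hg' : g' < 2 ^ t) (s : List ℕ)
    (hs : s.Sublist (sigmaList t g)) (hs' : s.Sublist (sigmaList t g')) :
    s.length ≤ 2 ^ ((Finset.range t).filter (fun i => g.testBit i = g'.testBit i)).card := by
  classical
  obtain ⟨hp1, hmem⟩ := pairwise_of_sublist hg hs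
  obtain ⟨hp2, -⟩ := pairwise_of_sublist hg' hs'
  have hpair : s.Pairwise (fun x y => (x ^^^ g < y ^^^ g ∧ x ^^^ g' < y ^^^ g') ∨
      (y ^^^ g < x ^^^ g ∧ y ^^^ g' < x ^^^ g')) :=
    (hp1.and hp2).imp (fun h => Or.inl h)
  haveI : Std.Symm (fun x y => (x ^^^ g < y ^^^ g ∧ x ^^^ g' < y ^^^ g') ∨
      (y ^^^ g < x ^^^ g ∧ y ^^^ g' < x ^^^ g')) := ⟨fun x y h => h.symm⟩
  have hforall := hpair.forall
  have hnd : s.Nodup := by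
    refine hp1.imp ?_
    intro x y hxy hxyeq
    subst hxyeq
    exact lt_irrefl _ hxy
  set Z := (Finset.range t).filter (fun i => g.testBit i = g'.testBit i) with hZ
  set π : ℕ → Finset ℕ := fun v => Z.filter (fun i => v.testBit i) with hπ
  have hinj : Set.InjOn π ↑s.toFinset := by
    intro a haf b hbf hab
    simp only [Finset.mem_coe, List.mem_toFinset] at haf hbf
    by_contra hne
    have hagree : ∀ i < t, g.testBit i = g'.testBit i → a.testBit i = b.testBit i := by
      intro i hit hgi
      have hiZ : i ∈ Z := by simp [hZ, hit, hgi]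
      have hiff := Finset.ext_iff.mp hab i
      simp only [hπ, Finset.mem_filter, hiZ, true_and] at hiff
      cases ha' : a.testBit i <;> cases hb' : b.testBit i <;> simp_all
    rcases hforall haf hbf hne with ⟨h1, h2⟩ | ⟨h1, h2⟩
    · exact agree_false (hmem a haf) (hmem b hbf) hne h1 h2 hagree
    · exact agree_false (hmem b hbf) (hmem a haf) (Ne.symm hne) h1 h2
        (fun i hit hgi => (hagree i hit hgi).symm)
  have hcard : s.length = (s.toFinset.image π).card := by
    rw [Finset.card_image_of_injOn hinj, List.toFinset_card_of_nodup hnd]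
  rw [hcard]
  have hsub : s.toFinset.image π ⊆ Z.powerset := by
    intro x hx
    obtain ⟨v, -, rfl⟩ := Finset.mem_image.mp hx
    exact Finset.mem_powerset.mpr (Finset.filter_subset _ _)
  calc (s.toFinset.image π).card ≤ Z.powerset.card := Finset.card_le_card hsub
    _ = 2 ^ Z.card := Finset.card_powerset Z

/-- Explicit ground permutation set: if `G ⊆ {0,1}^t` is a binary code of size at least
`2^{εt}` with pairwise relative Hamming distance at least `1-δ`, then
`D = {σ_g : g ∈ G}` is a set of at least `q^ε` permutations of `[q]` (`q = 2^t`) such that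
every two distinct members have LCS at most `q^δ`, i.e. pairwise Ulam distance at least
`q - q^δ`. -/
theorem ground_set_construction (t : ℕ) (ε δ : ℝ)
    (hε : ε ∈ Set.Ioo (0 : ℝ) 1) (hδ : δ ∈ Set.Ioo (0 : ℝ) 1)
    (G : Finset ℕ) (hG : ∀ g ∈ G, g < 2 ^ t)
    (hsize : (2 : ℝ) ^ (ε * t) ≤ G.card)
    (hrel : ∀ g ∈ G, ∀ g' ∈ G, g ≠ g' →
      (1 - δ) * t ≤ ((Finset.range t).filter (fun i => g.testBit i ≠ g'.testBit i)).card) :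
    (∀ g ∈ G, (sigmaList t g).Perm (List.range (2 ^ t))) ∧
    (((2 : ℝ) ^ t) ^ ε ≤ (G.image (fun g => sigmaList t g)).card) ∧
    (∀ g ∈ G, ∀ g' ∈ G, g ≠ g' →
      (lcsLen (sigmaList t g) (sigmaList t g') : ℝ) ≤ ((2 : ℝ) ^ t) ^ δ) := by
  classical
  have hpow : ((2 : ℝ) ^ t) = (2 : ℝ) ^ (t : ℝ) := (Real.rpow_natCast 2 t).symm
  -- part 1
  have part1 : ∀ g ∈ G, (sigmaList t g).Perm (List.range (2 ^ t)) := by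
    intro g hgG
    have hg := hG g hgG
    have hinj : Function.Injective (fun i : ℕ => i ^^^ g) := by
      intro i j h
      have := congrArg (fun x => x ^^^ g) h
      simpa [xor_cancel_right] using this
    have hnd : (sigmaList t g).Nodup := List.nodup_range.map hinj
    refine (List.perm_ext_iff_of_nodup hnd List.nodup_range).mpr ?_
    intro a
    simp only [sigmaList, List.mem_map, List.mem_range]
    constructor
    · rintro ⟨i, hi, rfl⟩
      exact Nat.xor_lt_two_pow hi hg
    · intro ha
      exact ⟨a ^^^ g, Nat.xor_lt_two_pow ha hg, by simp [xor_cancel_right]⟩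
  refine ⟨part1, ?_, ?_⟩
  -- part 2
  · have hhead : ∀ g, (sigmaList t g).headD 0 = g := by
      intro g
      obtain ⟨m, hm⟩ : ∃ m, 2 ^ t = m + 1 :=
        ⟨2 ^ t - 1, (Nat.succ_pred_eq_of_pos (Nat.two_pow_pos t)).symm⟩
      simp [sigmaList, hm, List.range_succ_eq_map]
    have hcard : (G.image (fun g => sigmaList t g)).card = G.card := by
      apply Finset.card_image_of_injOn
      intro a _ b _ h
      have h2 : (sigmaList t a).headD 0 = (sigmaList t b).headD 0 :=
        congrArg (fun l : List ℕ => l.headD 0) h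
      rwa [hhead, hhead] at h2
    rw [hcard, hpow, ← Real.rpow_mul (by norm_num : (0:ℝ) ≤ 2), mul_comm]
    exact hsize
  -- part 3
  · intro g hgG g' hg'G hne
    have hg := hG g hgG
    have hg' := hG g' hg'G
    set W := (Finset.range t).filter (fun i => g.testBit i ≠ g'.testBit i) with hW
    set Z := (Finset.range t).filter (fun i => g.testBit i = g'.testBit i) with hZ
    have hZW : Z.card + W.card = t := by
      have := Finset.card_filter_add_card_filter_not
        (s := Finset.range t) (p := fun i => g.testBit i = g'.testBit i)
      simpa [hZ, hW, Ne] using this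
    have hWt : W.card ≤ t := by omega
    have hlcs : lcsLen (sigmaList t g) (sigmaList t g') ≤ 2 ^ Z.card := by
      apply foldr_max_le
      intro x hx
      simp only [List.mem_map, List.mem_filter, List.mem_sublists] at hx
      obtain ⟨s, ⟨hs1, hs2⟩, rfl⟩ := hx
      have hs2' : s.Sublist (sigmaList t g') := by
        simpa using hs2
      exact sublist_len_le hg hg' s hs1 hs2'
    have hWlb : (1 - δ) * t ≤ (W.card : ℝ) := hrel g hgG g' hg'G hne
    have hZub : (Z.card : ℝ) ≤ δ * t := by
      have : (Z.card : ℝ) + W.card = t := by exact_mod_cast hZW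
      linarith
    calc (lcsLen (sigmaList t g) (sigmaList t g') : ℝ)
        ≤ ((2 : ℝ) ^ Z.card : ℝ) := by exact_mod_cast hlcs
      _ = (2 : ℝ) ^ ((Z.card : ℕ) : ℝ) := (Real.rpow_natCast 2 Z.card).symm
      _ ≤ (2 : ℝ) ^ (δ * (t : ℝ)) :=
          Real.rpow_le_rpow_of_exponent_le (by norm_num) hZub
      _ = ((2 : ℝ) ^ t) ^ δ := by
          rw [hpow, ← Real.rpow_mul (by norm_num : (0:ℝ) ≤ 2), mul_comm]
end

section
/- Let q = 2^t and let g, g' ∈ {0,1}^t agree on a set I of at most δt bit positions. If a common subsequence of σ_g and σ_{g'} (σ_h(i) = i XOR h) has length greater than 2^{δt}, then by pigeonhole there exist two distinct elements x, y of the subsequence whose binary representations agree on all positions in I; moreover any two such elements are ordered oppositely by σ_g and σ_{g'}, a contradiction. Hence L(σ_g, σ_{g'}) ≤ 2^{δt}. -/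
lemma sigmaList_pairwise (t g : ℕ) :
    List.Pairwise (fun u v => u ^^^ g < v ^^^ g) (sigmaList t g) := by
  refine List.Pairwise.map _ (fun a b h => ?_) (List.pairwise_lt_range (n := 2 ^ t))
  simpa [xor_cancel_right] using h

lemma sigmaList_nodup (t g : ℕ) : (sigmaList t g).Nodup := by
  refine List.Nodup.map (fun a b h => ?_) (List.nodup_range (n := 2 ^ t))
  have := congrArg (fun z => z ^^^ g) h
  simpa [xor_cancel_right] using this

lemma sigmaList_mem_lt {t g x : ℕ} (hg : g < 2 ^ t) (hx : x ∈ sigmaList t g) : x < 2 ^ t := by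
  rcases List.mem_map.1 hx with ⟨i, hi, rfl⟩
  exact Nat.xor_lt_two_pow (List.mem_range.1 hi) hg

lemma pair_order {t g x y : ℕ} (h : [x, y].Sublist (sigmaList t g)) :
    x ^^^ g < y ^^^ g := by
  have := List.Pairwise.sublist h (sigmaList_pairwise t g)
  exact List.rel_of_pairwise_cons this (List.mem_singleton_self y)

/-- two members of a list appear in one of the two orders -/
lemma pair_sublist {x y : ℕ} : ∀ {ρ : List ℕ}, x ∈ ρ → y ∈ ρ → x ≠ y →
    [x, y].Sublist ρ ∨ [y, x].Sublist ρ := by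
  intro ρ
  induction ρ with
  | nil => intro h; simp at h
  | cons a l ih =>
    intro hx hy hxy
    rcases List.mem_cons.1 hx with rfl | hx'
    · have hy' : y ∈ l := by
        rcases List.mem_cons.1 hy with rfl | h
        · exact absurd rfl hxy
        · exact h
      exact Or.inl (List.cons_sublist_cons.2 ((List.singleton_sublist).2 hy'))
    · rcases List.mem_cons.1 hy with rfl | hy'
      · exact Or.inr (List.cons_sublist_cons.2 ((List.singleton_sublist).2 hx'))
      · rcases ih hx' hy' hxy with h | h
        · exact Or.inl (h.cons a)
        · exact Or.inr (h.cons a)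

/-- the key ordering contradiction -/
lemma key_contra {t g g' x y : ℕ} (hx : x < 2 ^ t) (hy : y < 2 ^ t) (hxy : x ≠ y)
    (hagree : ∀ i < t, g.testBit i = g'.testBit i → x.testBit i = y.testBit i)
    (h1 : x ^^^ g < y ^^^ g) (h2 : x ^^^ g' < y ^^^ g') : False := by
  have hd : x ^^^ y ≠ 0 := by
    intro h
    exact hxy (by simpa [xor_cancel_right] using congrArg (fun z => z ^^^ y) h)
  obtain ⟨M, hM, hMhigh⟩ := Nat.exists_most_significant_bit hd
  have hMlt : M < t := by
    by_contra h
    push_neg at h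
    have : (x ^^^ y) < 2 ^ M :=
      lt_of_lt_of_le (Nat.xor_lt_two_pow hx hy) (Nat.pow_le_pow_right (by norm_num) h)
    rw [Nat.testBit_lt_two_pow this] at hM
    exact Bool.false_ne_true hM
  have hbitM : x.testBit M ≠ y.testBit M := by
    intro h
    rw [Nat.testBit_xor, h, Bool.xor_self] at hM
    exact Bool.false_ne_true hM
  have hhigh : ∀ j, M < j → x.testBit j = y.testBit j := by
    intro j hj
    have := hMhigh j hj
    rw [Nat.testBit_xor] at this
    cases hb : x.testBit j <;> cases hb' : y.testBit j <;> simp_all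
  -- general claim: if x^^^h < y^^^h then x.testBit M = h.testBit M
  have claim : ∀ h : ℕ, x ^^^ h < y ^^^ h → x.testBit M = h.testBit M := by
    intro h hlt
    by_contra hne
    have hxh : (x ^^^ h).testBit M = true := by
      rw [Nat.testBit_xor]
      cases hxb : x.testBit M <;> cases hhb : h.testBit M <;> simp_all
    have hyh : (y ^^^ h).testBit M = false := by
      rw [Nat.testBit_xor]
      have : y.testBit M = h.testBit M := by
        cases hxb : x.testBit M <;> cases hhb : h.testBit M <;>
          cases hyb : y.testBit M <;> simp_all
      simp [this]
    have : y ^^^ h < x ^^^ h := by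
      refine Nat.lt_of_testBit M hyh hxh (fun j hj => ?_)
      rw [Nat.testBit_xor, Nat.testBit_xor, hhigh j hj]
    omega
  have e1 := claim g h1
  have e2 := claim g' h2
  exact hbitM (hagree M hMlt (e1 ▸ e2 ▸ rfl))

lemma foldr_max_le_s10 {N : ℕ} : ∀ {l : List (List ℕ)}, (∀ s ∈ l, s.length ≤ N) →
    (l.map List.length).foldr max 0 ≤ N := by
  intro l
  induction l with
  | nil => intro _; simp
  | cons a l ih =>
    intro h
    simp only [List.map_cons, List.foldr_cons]
    exact max_le (h a (List.mem_cons_self (a := a) (l := l))) (ih fun s hs => h s (List.mem_cons_of_mem a hs))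

/-- If `g, g' ∈ {0,1}^t` agree on a set `I` of at most `δt` bit positions, then any common
subsequence of `σ_g` and `σ_{g'}` has length at most `2^{δt}` (a longer one would, by
pigeonhole, contain two distinct elements agreeing on all positions in `I`, which are
ordered oppositely by `σ_g` and `σ_{g'}` — a contradiction). Hence
`L(σ_g, σ_{g'}) ≤ 2^{δt}`. -/
theorem lcs_le_of_small_agreement (t g g' : ℕ) (δ : ℝ) (hδ : δ ∈ Set.Ioo (0 : ℝ) 1)
    (hg : g < 2 ^ t) (hg' : g' < 2 ^ t) (I : Finset ℕ)
    (hI : I = (Finset.range t).filter (fun i => g.testBit i = g'.testBit i))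
    (hIcard : (I.card : ℝ) ≤ δ * t) :
    (∀ ρ : List ℕ, ρ.Sublist (sigmaList t g) → ρ.Sublist (sigmaList t g') →
      (2 : ℝ) ^ (δ * t) < ρ.length →
      ∃ x ∈ ρ, ∃ y ∈ ρ, x ≠ y ∧ ∀ i ∈ I, x.testBit i = y.testBit i) ∧
    (lcsLen (sigmaList t g) (sigmaList t g') : ℝ) ≤ (2 : ℝ) ^ (δ * t) := by
  -- real bound : (2^|I| : ℝ) ≤ 2^(δt)
  have hpow : ((2 ^ I.card : ℕ) : ℝ) ≤ (2 : ℝ) ^ (δ * t) := by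
    push_cast
    calc (2 : ℝ) ^ (I.card : ℕ) = (2 : ℝ) ^ ((I.card : ℕ) : ℝ) := (Real.rpow_natCast 2 _).symm
    _ ≤ (2 : ℝ) ^ (δ * t) := Real.rpow_le_rpow_of_exponent_le (by norm_num) hIcard
  -- pigeonhole: if ρ is nodup and long, two elements agree on I
  have pigeon : ∀ ρ : List ℕ, ρ.Nodup → 2 ^ I.card < ρ.length →
      ∃ x ∈ ρ, ∃ y ∈ ρ, x ≠ y ∧ ∀ i ∈ I, x.testBit i = y.testBit i := by
    intro ρ hnd hlen
    have hcard : Fintype.card ({ i // i ∈ I } → Bool) < Fintype.card { x // x ∈ ρ.toFinset } := by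
      rw [Fintype.card_fun, Fintype.card_coe, Fintype.card_coe, Fintype.card_bool,
        List.toFinset_card_of_nodup hnd]
      exact hlen
    obtain ⟨a, b, hab, hfab⟩ :=
      Fintype.exists_ne_map_eq_of_card_lt
        (fun (x : { x // x ∈ ρ.toFinset }) (i : { i // i ∈ I }) => (x : ℕ).testBit (i : ℕ)) hcard
    refine ⟨a, List.mem_toFinset.1 a.2, b, List.mem_toFinset.1 b.2,
      fun h => hab (Subtype.ext h), fun i hi => ?_⟩
    exact congrFun hfab ⟨i, hi⟩
  -- key: common subsequences have no two distinct elements agreeing on I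
  have nokey : ∀ ρ : List ℕ, ρ.Sublist (sigmaList t g) → ρ.Sublist (sigmaList t g') →
      ∀ x ∈ ρ, ∀ y ∈ ρ, x ≠ y → (∀ i ∈ I, x.testBit i = y.testBit i) → False := by
    intro ρ hsg hsg' x hx y hy hxy hagree
    have hxlt : x < 2 ^ t := sigmaList_mem_lt hg (hsg.mem hx)
    have hylt : y < 2 ^ t := sigmaList_mem_lt hg (hsg.mem hy)
    have hagree' : ∀ i < t, g.testBit i = g'.testBit i → x.testBit i = y.testBit i := by
      intro i hit higg
      exact hagree i (hI ▸ Finset.mem_filter.2 ⟨Finset.mem_range.2 hit, higg⟩)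
    rcases pair_sublist hx hy hxy with h | h
    · exact key_contra hxlt hylt hxy hagree' (pair_order (h.trans hsg))
        (pair_order (h.trans hsg'))
    · exact key_contra hylt hxlt hxy.symm
        (fun i hit higg => (hagree' i hit higg).symm)
        (pair_order (h.trans hsg)) (pair_order (h.trans hsg'))
  -- length bound for common subsequences
  have lenbd : ∀ ρ : List ℕ, ρ.Sublist (sigmaList t g) → ρ.Sublist (sigmaList t g') →
      ρ.length ≤ 2 ^ I.card := by
    intro ρ hsg hsg'
    by_contra h
    push_neg at h
    obtain ⟨x, hx, y, hy, hxy, hagree⟩ :=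
      pigeon ρ (hsg.nodup (sigmaList_nodup t g)) h
    exact nokey ρ hsg hsg' x hx y hy hxy hagree
  constructor
  · intro ρ hsg hsg' hlen
    refine pigeon ρ (hsg.nodup (sigmaList_nodup t g)) ?_
    have : ((2 ^ I.card : ℕ) : ℝ) < (ρ.length : ℝ) := lt_of_le_of_lt hpow hlen
    exact_mod_cast this
  · have : (lcsLen (sigmaList t g) (sigmaList t g') : ℕ) ≤ 2 ^ I.card := by
      refine foldr_max_le_s10 (fun s hs => ?_)
      rw [List.mem_filter] at hs
      exact lenbd s (List.mem_sublists.1 hs.1) (of_decide_eq_true hs.2)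
    calc (lcsLen (sigmaList t g) (sigmaList t g') : ℝ) ≤ ((2 ^ I.card : ℕ) : ℝ) := by
          exact_mod_cast this
    _ ≤ (2 : ℝ) ^ (δ * t) := hpow
end

section
/- Restriction invariance under later-stage shuffles: let n = q^ℓ, and fix a stage j ∈ {1,...,ℓ}. Suppose π^{(k)} is obtained from π^{(j)} by a sequence of operations (stages j+1,...,k), each of which permutes, for each choice of prefix α ∈ [q]^{i−1} and suffix β ∈ [q]^{ℓ−i} with i > j, only the symbols at positions {αxβ : x ∈ [q]} among themselves. Then for any fixed (α, β) ∈ [q]^{j−1} × [q]^{ℓ−j}, the relative order of the symbols occupying positions {αxβ : x ∈ [q]} at stage j is preserved: π^{(k)}|_A is order-isomorphic to π^{(j)}|_A where A is the set of symbols at those positions in π^{(j)}. -/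
/-- Restriction invariance under later-stage shuffles. Positions in `[n]`, `n = q^ℓ`, are
identified with their base-`q` representations in `[q]^ℓ` (most significant digit first).
A stage-`i` operation is a bijection `ρ` of positions that, for each prefix
`α ∈ [q]^{i-1}` and suffix `β ∈ [q]^{ℓ-i}`, permutes only the positions
`{αxβ : x ∈ [q]}` among themselves; numerically this means `ρ` preserves both the quotient
by `q^{ℓ-i+1}` (the prefix `α`) and the remainder modulo `q^{ℓ-i}` (the suffix `β`).
If `πk` is obtained from `πj` by composing such operations for stages `i` with
`j < i ≤ k`, then for each `(α, β) ∈ [q]^{j-1} × [q]^{ℓ-j}` the relative order of the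
symbols occupying the positions `{αxβ : x ∈ [q]}` at stage `j` is preserved: whenever
positions `m ≠ m'` lie in such a group (same quotient by `q^{ℓ-j+1}` and same remainder
mod `q^{ℓ-j}`) and `p, p'` are the positions in `πk` holding the stage-`j` symbols
`πj m, πj m'` (i.e. `ρ p = m`, `ρ p' = m'` for the composite `ρ`), then
`p < p' ↔ m < m'`. -/
theorem restriction_invariance (q ℓ j k n : ℕ) (hn : n = q ^ ℓ)
    (hj : 1 ≤ j) (hjk : j ≤ k) (hk : k ≤ ℓ)
    (πj πk : ℕ → ℕ) (ρs : List (ℕ → ℕ))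
    (hstages : ∀ ρ ∈ ρs, ∃ i, j < i ∧ i ≤ k ∧
      Set.BijOn ρ (Set.Iio n) (Set.Iio n) ∧
      ∀ m < n, ρ m / q ^ (ℓ - i + 1) = m / q ^ (ℓ - i + 1) ∧
        ρ m % q ^ (ℓ - i) = m % q ^ (ℓ - i))
    (hcomp : ∀ m < n, πk m = πj ((ρs.foldr (· ∘ ·) id) m)) :
    ∀ m m' p p' : ℕ, m < n → m' < n → p < n → p' < n →
      m / q ^ (ℓ - j + 1) = m' / q ^ (ℓ - j + 1) →
      m % q ^ (ℓ - j) = m' % q ^ (ℓ - j) →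
      m ≠ m' →
      (ρs.foldr (· ∘ ·) id) p = m → (ρs.foldr (· ∘ ·) id) p' = m' →
      (p < p' ↔ m < m') := by

  intro m m' p p' hm hm' hp hp' hquot hmod hne hρp hρp'
  have key : ∀ L : List (ℕ → ℕ), (∀ ρ ∈ L, ∃ i, j < i ∧ i ≤ k ∧
      Set.BijOn ρ (Set.Iio n) (Set.Iio n) ∧
      ∀ m < n, ρ m / q ^ (ℓ - i + 1) = m / q ^ (ℓ - i + 1) ∧
        ρ m % q ^ (ℓ - i) = m % q ^ (ℓ - i)) →
      ∀ x, x < n → (L.foldr (· ∘ ·) id) x < n ∧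
        (L.foldr (· ∘ ·) id) x / q ^ (ℓ - j) = x / q ^ (ℓ - j) := by
    intro L
    induction L with
    | nil => intro _ x hx; simpa using hx
    | cons ρ t ih =>
      intro hL x hx
      have ht := ih (fun ρ' h => hL ρ' (List.mem_cons_of_mem _ h)) x hx
      obtain ⟨i, hji, hik, hbij, hpres⟩ := hL ρ List.mem_cons_self
      set y := (t.foldr (· ∘ ·) id) x
      have hy : y < n := ht.1
      have hρy : ρ y < n := hbij.mapsTo hy
      have hpres' := hpres y hy
      have hd : q ^ (ℓ - j) = q ^ (ℓ - i + 1) * q ^ ((ℓ - j) - (ℓ - i + 1)) := by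
        rw [← pow_add]; congr 1; omega
      have hquoty : ρ y / q ^ (ℓ - j) = y / q ^ (ℓ - j) := by
        rw [hd, ← Nat.div_div_eq_div_mul, ← Nat.div_div_eq_div_mul, hpres'.1]
      refine ⟨?_, ?_⟩
      · simpa using hρy
      · simpa using hquoty.trans ht.2
  have kp := key ρs hstages p hp
  have kp' := key ρs hstages p' hp'
  set e := ℓ - j with he
  have hpm : m / q ^ e = p / q ^ e := by rw [← hρp]; exact kp.2
  have hpm' : m' / q ^ e = p' / q ^ e := by rw [← hρp']; exact kp'.2
  have hne' : m / q ^ e ≠ m' / q ^ e := by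
    intro h
    have h1 := Nat.div_add_mod m (q ^ e)
    have h2 := Nat.div_add_mod m' (q ^ e)
    rw [h, hmod] at h1
    exact hne (h1.symm.trans h2)
  have hiff1 : m < m' ↔ m / q ^ e < m' / q ^ e := by
    constructor
    · intro h; exact lt_of_le_of_ne (Nat.div_le_div_right h.le) hne'
    · intro h; exact Nat.lt_of_div_lt_div h
  have hiff2 : p < p' ↔ p / q ^ e < p' / q ^ e := by
    constructor
    · intro h
      refine lt_of_le_of_ne (Nat.div_le_div_right h.le) ?_
      rw [← hpm, ← hpm']; exact hne'
    · intro h; exact Nat.lt_of_div_lt_div h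
  rw [hiff2, hiff1, hpm, hpm']
end
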